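/- Let M ∈ GL(7,F₂) be an element of order 2 whose fixed-point space {v ∈ F₂⁷ : v·M = v} has dimension 6, and let C be a set of 3-dimensional F₂-linear subspaces of F₂⁷, any two distinct members of which intersect in a subspace of dimension at most 1, such that C is invariant under M. Then |C| ≤ 106. -/

import Mathlib

/-- The ambient vector space `F₂⁷`. -/
abbrev V : Type := Fin 7 → ZMod 2

/-- `GL(7,F₂)` acts on the subspaces of `F₂⁷` by mapping each subspace to its image
under the associated linear automorphism. -/
noncomputable instance : MulAction (GL (Fin 7) (ZMod 2)) (Submodule (ZMod 2) V) where
  smul M W := W.map (Matrix.mulVecLin (M : Matrix (Fin 7) (Fin 7) (ZMod 2)))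
  one_smul W := by
    show W.map _ = W
    simp
  mul_smul M N W := by
    show W.map _ = (W.map _).map _
    rw [← Submodule.map_comp]
    simp [Matrix.mulVecLin_mul]

/-- `C` is a `(7,4;3)₂` constant dimension code: a set of `3`-dimensional subspaces of `F₂⁷`
any two distinct members of which intersect in a subspace of dimension at most `1`. -/
def IsCode (C : Set (Submodule (ZMod 2) V)) : Prop :=
  (∀ W ∈ C, Module.finrank (ZMod 2) W = 3) ∧
  ∀ W₁ ∈ C, ∀ W₂ ∈ C, W₁ ≠ W₂ → Module.finrank (ZMod 2) ↥(W₁ ⊓ W₂) ≤ 1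

/-- The fixed-point space of `M ∈ GL(7,F₂)`: the eigenspace of `M` for the eigenvalue `1`,
i.e. the kernel of `M - I`. -/
noncomputable def fixedSpace (M : GL (Fin 7) (ZMod 2)) : Submodule (ZMod 2) V :=
  LinearMap.ker
    (Matrix.mulVecLin (M : Matrix (Fin 7) (Fin 7) (ZMod 2)) - LinearMap.id)

open Module Finset

lemma VV.add_self (y : V) : y + y = 0 := by
  have : (2 : ZMod 2) • y = 0 := by rw [show (2 : ZMod 2) = 0 by decide, zero_smul]
  rwa [two_smul] at this

lemma VV.smul_def (M : GL (Fin 7) (ZMod 2)) (W : Submodule (ZMod 2) V) :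
    M • W = W.map (Matrix.mulVecLin (M : Matrix (Fin 7) (Fin 7) (ZMod 2))) := rfl

/-- the finset of a set of vectors -/
noncomputable def fs (s : Set V) : Finset V := s.toFinite.toFinset

lemma VV.mem_fs {s : Set V} {x : V} : x ∈ fs s ↔ x ∈ s := Set.Finite.mem_toFinset _

lemma VV.card_fs (U : Submodule (ZMod 2) V) :
    (fs (U : Set V)).card = 2 ^ finrank (ZMod 2) U := by
  classical
  rw [fs, ← Set.ncard_eq_toFinset_card, ← Nat.card_coe_set_eq, Nat.card_eq_fintype_card]
  exact card_eq_pow_finrank (K := ZMod 2)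

lemma VV.finrank_two_le (U : Submodule (ZMod 2) V) (x y : V) (hx : x ∈ U) (hy : y ∈ U)
    (hx0 : x ≠ 0) (hy0 : y ≠ 0) (hxy : x ≠ y) : 2 ≤ finrank (ZMod 2) U := by
  by_contra h
  push_neg at h
  have hcard : (fs (U : Set V)).card ≤ 2 := by
    rw [VV.card_fs]
    calc 2 ^ finrank (ZMod 2) U ≤ 2 ^ 1 := Nat.pow_le_pow_right (by norm_num) (by omega)
      _ = 2 := by norm_num
  have hsub : ({0, x, y} : Finset V) ⊆ fs (U : Set V) := by
    intro z hz
    rw [VV.mem_fs]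
    simp only [Finset.mem_insert, Finset.mem_singleton] at hz
    rcases hz with rfl | rfl | rfl
    · exact U.zero_mem
    · exact hx
    · exact hy
  have h3 : ({0, x, y} : Finset V).card = 3 := by
    rw [Finset.card_insert_of_notMem (by simp [Ne.symm hx0, Ne.symm hy0]),
      Finset.card_insert_of_notMem (by simp [hxy]), Finset.card_singleton]
  have := Finset.card_le_card hsub
  omega

lemma VV.pack {α : Type*} (F : Finset α) (S : α → Finset V) (T : Finset V)
    (hT : ∀ a ∈ F, S a ⊆ T)
    (hd : ∀ a ∈ F, ∀ b ∈ F, a ≠ b → Disjoint (S a) (S b)) :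
    ∑ a ∈ F, (S a).card ≤ T.card := by
  classical
  rw [← Finset.card_biUnion hd]
  exact Finset.card_le_card (Finset.biUnion_subset.mpr hT)

lemma VV.pack2 {α : Type*} (F : Finset α) (S : α → Finset (V × V)) (T : Finset (V × V))
    (hT : ∀ a ∈ F, S a ⊆ T)
    (hd : ∀ a ∈ F, ∀ b ∈ F, a ≠ b → Disjoint (S a) (S b)) :
    ∑ a ∈ F, (S a).card ≤ T.card := by
  classical
  rw [← Finset.card_biUnion hd]
  exact Finset.card_le_card (Finset.biUnion_subset.mpr hT)


set_option maxHeartbeats 2000000 in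
/-- A `(7,4;3)₂` code invariant under an element of order 2 of `GL(7,F₂)` with
6-dimensional fixed-point space has at most 106 codewords. -/
theorem stmt_17 (M : GL (Fin 7) (ZMod 2)) (hM : orderOf M = 2)
    (hfix : Module.finrank (ZMod 2) (fixedSpace M) = 6)
    (C : Set (Submodule (ZMod 2) V)) (hC : IsCode C)
    (hInv : ∀ W ∈ C, M • W ∈ C) :
    C.ncard ≤ 106 := by
  classical
  set g := Matrix.mulVecLin (M : Matrix (Fin 7) (Fin 7) (ZMod 2)) with hg
  set φ : V →ₗ[ZMod 2] V :=
    Matrix.mulVecLin (M : Matrix (Fin 7) (Fin 7) (ZMod 2)) - LinearMap.id with hφ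
  set H := fixedSpace M with hH
  have hHker : H = LinearMap.ker φ := rfl
  have hgg : ∀ x : V, g (g x) = x := by
    intro x
    have h : (M : Matrix (Fin 7) (Fin 7) (ZMod 2)) * (M : Matrix (Fin 7) (Fin 7) (ZMod 2)) = 1 := by
      have := pow_orderOf_eq_one M
      rw [hM] at this
      have := congrArg (Units.val) this
      simpa [pow_two] using this
    have h2 := congrArg (fun A => Matrix.mulVecLin A x) h
    simpa [Matrix.mulVecLin_mul, hg] using h2
  have hφx : ∀ x : V, φ x = g x - x := fun x => rfl
  have hφφ : ∀ x : V, φ (φ x) = 0 := by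
    intro x
    rw [hφx, hφx, map_sub, hgg]
    funext i
    have h2 : ∀ a b : ZMod 2, a - b - (b - a) = 0 := by decide
    simpa using h2 (x i) (g x i)
  -- rank of φ is 1
  have hrange : finrank (ZMod 2) (LinearMap.range φ) = 1 := by
    have := LinearMap.finrank_range_add_finrank_ker φ
    rw [← hHker, hfix] at this
    have h7 : finrank (ZMod 2) V = 7 := by simp
    omega
  -- get v
  obtain ⟨x₀, hx₀⟩ : ∃ x₀ : V, φ x₀ ≠ 0 := by
    by_contra h
    push_neg at h
    have : LinearMap.range φ = ⊥ :=
      LinearMap.range_eq_bot.mpr (LinearMap.ext fun x => by simpa using h x)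
    rw [this] at hrange
    simp at hrange
  set v := φ x₀ with hv
  have hv0 : v ≠ 0 := hx₀
  have hvH : v ∈ H := by
    rw [hHker, LinearMap.mem_ker]
    exact hφφ x₀
  have hspan : LinearMap.range φ = Submodule.span (ZMod 2) {v} := by
    symm
    apply Submodule.eq_of_le_of_finrank_eq
    · rw [Submodule.span_le, Set.singleton_subset_iff]
      exact ⟨x₀, rfl⟩
    · rw [finrank_span_singleton hv0, hrange]
  have hφ01 : ∀ x : V, φ x = 0 ∨ φ x = v := by
    intro x
    have : φ x ∈ Submodule.span (ZMod 2) {v} := hspan ▸ ⟨x, rfl⟩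
    obtain ⟨c, hc⟩ := Submodule.mem_span_singleton.mp this
    have hcc : ∀ c : ZMod 2, c = 0 ∨ c = 1 := by decide
    rcases hcc c with rfl | rfl
    · left; rw [← hc, zero_smul]
    · right; rw [← hc, one_smul]
  -- fixed vectors
  have hfixed : ∀ x : V, x ∈ H → g x = x := by
    intro x hx
    rw [hHker, LinearMap.mem_ker] at hx
    have := hφx x ▸ hx
    rwa [sub_eq_zero] at this
  -- intersection with H has dimension at least 2
  have hfix2 : ∀ W ∈ C, 2 ≤ finrank (ZMod 2) ↥(W ⊓ H) := by
    intro W hW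
    have h1 := Submodule.finrank_sup_add_finrank_inf_eq W H
    have h2 : finrank (ZMod 2) ↥(W ⊔ H) ≤ 7 := by
      have := Submodule.finrank_le (W ⊔ H)
      simpa using this
    rw [hC.1 W hW, hfix] at h1
    omega
  -- all codewords are fixed by M
  have hWfix : ∀ W ∈ C, M • W = W := by
    intro W hW
    by_contra hne
    have hle : W ⊓ H ≤ W ⊓ (M • W) := by
      intro x hx
      rw [Submodule.mem_inf] at hx ⊢
      refine ⟨hx.1, ?_⟩
      rw [VV.smul_def]
      exact ⟨x, hx.1, hfixed x hx.2⟩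
    have h2 : 2 ≤ finrank (ZMod 2) ↥(W ⊓ (M • W)) :=
      le_trans (hfix2 W hW) (Submodule.finrank_mono hle)
    have := hC.2 W hW (M • W) (hInv W hW) (fun h => hne h.symm)
    omega
  -- non-H codewords contain v
  have hvmem : ∀ W ∈ C, ¬ (W ≤ H) → v ∈ W := by
    intro W hW hWH
    obtain ⟨w, hwW, hwH⟩ := SetLike.not_le_iff_exists.mp hWH
    have hφw : φ w = v := by
      rcases hφ01 w with h | h
      · exact absurd (LinearMap.mem_ker.mpr h) (hHker ▸ hwH)
      · exact h
    have hgw : g w ∈ W := by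
      have h1 : g w ∈ W.map g := Submodule.mem_map_of_mem hwW
      rw [hg, ← VV.smul_def, hWfix W hW] at h1
      exact h1
    rw [← hφw, hφx]
    exact sub_mem hgw hwW
  -- key: two codewords sharing two nonzero vectors are equal
  have hkey : ∀ W1 ∈ C, ∀ W2 ∈ C, W1 ≠ W2 → ∀ x y : V, x ∈ W1 → x ∈ W2 → y ∈ W1 → y ∈ W2 →
      x ≠ 0 → y ≠ 0 → x ≠ y → False := by
    intro W1 hW1 W2 hW2 hne x y hx1 hx2 hy1 hy2 hx0 hy0 hxy
    have h1 := hC.2 W1 hW1 W2 hW2 hne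
    have h2 := VV.finrank_two_le (W1 ⊓ W2) x y (Submodule.mem_inf.mpr ⟨hx1, hx2⟩)
      (Submodule.mem_inf.mpr ⟨hy1, hy2⟩) hx0 hy0 hxy
    omega
  -- finiteness of C
  have : Finite (Submodule (ZMod 2) V) :=
    Finite.of_injective (fun U => (U : Set V)) SetLike.coe_injective
  have hCfinite : C.Finite := C.toFinite
  set Cf : Finset (Submodule (ZMod 2) V) := hCfinite.toFinset with hCfdef
  have hmemCf : ∀ {W}, W ∈ Cf ↔ W ∈ C := fun {W} => Set.Finite.mem_toFinset _
  have hCcard : C.ncard = Cf.card := Set.ncard_eq_toFinset_card _ _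
  -- the partition
  set B := Cf.filter (fun W => W ≤ H ∧ v ∉ W) with hBdef
  set A1 := Cf.filter (fun W => W ≤ H ∧ v ∈ W) with hA1def
  set A2 := Cf.filter (fun W => ¬ W ≤ H) with hA2def
  set BA := Cf.filter (fun W => W ≤ H) with hBAdef
  set A := Cf.filter (fun W => v ∈ W) with hAdef
  have hsplit1 : BA.card + A2.card = Cf.card :=
    Finset.card_filter_add_card_filter_not (fun W => W ≤ H)
  have hBAf1 : BA.filter (fun W => v ∈ W) = A1 := by
    rw [hBAdef, Finset.filter_filter, hA1def]
  have hBAf2 : BA.filter (fun W => ¬ v ∈ W) = B := by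
    rw [hBAdef, Finset.filter_filter, hBdef]
  have hsplit2 : A1.card + B.card = BA.card := by
    rw [← hBAf1, ← hBAf2]
    exact Finset.card_filter_add_card_filter_not (fun W => v ∈ W)
  have hA1A2 : A1.card + A2.card ≤ A.card := by
    rw [← Finset.card_union_of_disjoint (by
      rw [Finset.disjoint_left]
      intro W h1 h2
      rw [Finset.mem_filter] at h1 h2
      exact h2.2 h1.2.1)]
    apply Finset.card_le_card
    intro W hW
    rw [Finset.mem_union, Finset.mem_filter, Finset.mem_filter] at hW
    rw [Finset.mem_filter]
    rcases hW with h | h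
    · exact ⟨h.1, h.2.2⟩
    · exact ⟨h.1, hvmem W (hmemCf.mp h.1) h.2⟩
  -- basic cardinalities
  have hcardW : ∀ W ∈ C, (fs (W : Set V)).card = 8 := by
    intro W hW
    rw [VV.card_fs, hC.1 W hW]; norm_num
  have hcardHf : (fs (H : Set V)).card = 64 := by
    rw [VV.card_fs, hfix]; norm_num
  have hunivcard : (Finset.univ : Finset V).card = 128 := by
    rw [Finset.card_univ]
    simp [Fintype.card_fun]
  -- Counting 1 : members containing v
  set S1 : Submodule (ZMod 2) V → Finset V := fun W => ((fs (W : Set V)).erase 0).erase v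
    with hS1def
  have hS1card : ∀ W ∈ C, v ∈ W → (S1 W).card = 6 := by
    intro W hWC hvW
    have h0 : (0 : V) ∈ fs (W : Set V) := VV.mem_fs.mpr W.zero_mem
    have hvm : v ∈ (fs (W : Set V)).erase 0 :=
      Finset.mem_erase.mpr ⟨hv0, VV.mem_fs.mpr hvW⟩
    rw [hS1def]
    simp only []
    rw [Finset.card_erase_of_mem hvm, Finset.card_erase_of_mem h0, hcardW W hWC]
  have hS1mem : ∀ W x, x ∈ S1 W ↔ (x ≠ v ∧ x ≠ 0 ∧ x ∈ W) := by
    intro W x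
    rw [hS1def]
    simp only [Finset.mem_erase, VV.mem_fs, SetLike.mem_coe]
  have hcount1 : 6 * A.card ≤ 126 := by
    set T1 : Finset V := (Finset.univ.erase 0).erase v with hT1def
    have hT1card : T1.card = 126 := by
      have h1 : T1.card = (Finset.univ.erase (0:V)).card - 1 :=
        Finset.card_erase_of_mem (Finset.mem_erase.mpr ⟨hv0, Finset.mem_univ v⟩)
      have h2 : (Finset.univ.erase (0:V)).card = (Finset.univ : Finset V).card - 1 :=
        Finset.card_erase_of_mem (Finset.mem_univ 0)
      rw [h1, h2, hunivcard]
    have hp := VV.pack A S1 T1 (fun W _ =>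
        Finset.erase_subset_erase v (Finset.erase_subset_erase 0 (Finset.subset_univ _)))
      (by
        intro W1 h1 W2 h2 hne
        rw [Finset.mem_filter] at h1 h2
        rw [Finset.disjoint_left]
        intro x hx1 hx2
        rw [hS1mem] at hx1 hx2
        exact hkey W1 (hmemCf.mp h1.1) W2 (hmemCf.mp h2.1) hne x v hx1.2.2 hx2.2.2
          h1.2 h2.2 hx1.2.1 hv0 hx1.1)
    have hsum : ∑ W ∈ A, (S1 W).card = A.card * 6 :=
      Finset.sum_const_nat (fun W hW => by
        rw [Finset.mem_filter] at hW
        exact hS1card W (hmemCf.mp hW.1) hW.2)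
    rw [hsum, hT1card] at hp
    omega
  -- Counting 3 : members not contained in H
  have hcount3 : 4 * A2.card ≤ 64 := by
    set S3 : Submodule (ZMod 2) V → Finset V :=
      fun W => (fs (W : Set V)).filter (fun x => x ∉ H) with hS3def
    set T3 : Finset V := Finset.univ.filter (fun x => x ∉ H) with hT3def
    have hT3card : T3.card = 64 := by
      have h1 := Finset.card_filter_add_card_filter_not
        (s := (Finset.univ : Finset V)) (fun x => x ∈ H)
      have h2 : Finset.univ.filter (fun x => x ∈ H) = fs (H : Set V) := by
        ext x
        simp [VV.mem_fs]
      rw [h2, hcardHf, hunivcard] at h1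
      have h3 : Finset.univ.filter (fun x => ¬ x ∈ H) = T3 := rfl
      rw [h3] at h1
      omega
    have hS3card : ∀ W ∈ A2, (S3 W).card = 4 := by
      intro W hW
      rw [Finset.mem_filter] at hW
      have hWC : W ∈ C := hmemCf.mp hW.1
      have h1 := Finset.card_filter_add_card_filter_not
        (s := fs (W : Set V)) (fun x => x ∈ H)
      have h2 : (fs (W : Set V)).filter (fun x => x ∈ H) = fs ((W ⊓ H : Submodule (ZMod 2) V) : Set V) := by
        ext x
        simp [VV.mem_fs, Submodule.mem_inf]
      have hlt : W ⊓ H < W := lt_of_le_of_ne inf_le_left (fun h => hW.2 (inf_eq_left.mp h))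
      have h3 : finrank (ZMod 2) ↥(W ⊓ H) < 3 := by
        have := Submodule.finrank_lt_finrank_of_lt hlt
        rwa [hC.1 W hWC] at this
      have h4 : finrank (ZMod 2) ↥(W ⊓ H) = 2 := le_antisymm (by omega) (hfix2 W hWC)
      rw [h2, VV.card_fs, h4, hcardW W hWC] at h1
      have : (2:ℕ) ^ 2 = 4 := by norm_num
      rw [this] at h1
      have : (S3 W).card = (Finset.filter (fun x => ¬ x ∈ H) (fs (W:Set V))).card := rfl
      omega
    have hp := VV.pack A2 S3 T3
      (fun W _ => Finset.filter_subset_filter _ (by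
        intro x hx
        exact Finset.mem_univ x))
      (by
        intro W1 h1 W2 h2 hne
        have h1' := Finset.mem_filter.mp h1
        have h2' := Finset.mem_filter.mp h2
        rw [Finset.disjoint_left]
        intro x hx1 hx2
        rw [hS3def] at hx1 hx2
        simp only [Finset.mem_filter, VV.mem_fs] at hx1 hx2
        have hW1C := hmemCf.mp h1'.1
        have hW2C := hmemCf.mp h2'.1
        exact hkey W1 hW1C W2 hW2C hne x v hx1.1 hx2.1
          (hvmem W1 hW1C h1'.2) (hvmem W2 hW2C h2'.2)
          (fun h => hx1.2 (h ▸ H.zero_mem)) hv0 (fun h => hx1.2 (h ▸ hvH)))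
    have hsum : ∑ W ∈ A2, (S3 W).card = A2.card * 4 := Finset.sum_const_nat hS3card
    rw [hsum, hT3card] at hp
    omega
  -- Counting 2 : members contained in H
  have hnegv : -v = v := neg_eq_of_add_eq_zero_left (VV.add_self v)
  have hcount2 : 42 * B.card + 24 * A1.card ≤ 3720 := by
    set sH : Finset V := ((fs (H : Set V)).erase 0).erase v with hsHdef
    have hsHmem : ∀ x, x ∈ sH ↔ (x ≠ v ∧ x ≠ 0 ∧ x ∈ H) := by
      intro x
      rw [hsHdef]
      simp only [Finset.mem_erase, VV.mem_fs, SetLike.mem_coe]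
    have hsHcard : sH.card = 62 := by
      have h1 : sH.card = ((fs (H : Set V)).erase 0).card - 1 :=
        Finset.card_erase_of_mem (Finset.mem_erase.mpr ⟨hv0, VV.mem_fs.mpr hvH⟩)
      have h2 : ((fs (H : Set V)).erase 0).card = (fs (H : Set V)).card - 1 :=
        Finset.card_erase_of_mem (VV.mem_fs.mpr H.zero_mem)
      rw [h1, h2, hcardHf]
    set S2 : Submodule (ZMod 2) V → Finset (V × V) :=
      fun W => (S1 W).offDiag.filter (fun p => ¬ p.1 + p.2 = v) with hS2def
    set T2 : Finset (V × V) := sH.offDiag.filter (fun p => ¬ p.1 + p.2 = v) with hT2def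
    have hT2card : T2.card ≤ 3720 := by
      have hoff : sH.offDiag.card = 3782 := by
        rw [Finset.offDiag_card, hsHcard]
      have h1 := Finset.card_filter_add_card_filter_not
        (s := sH.offDiag) (fun p => p.1 + p.2 = v)
      have hinj : sH.card ≤ (sH.offDiag.filter (fun p => p.1 + p.2 = v)).card := by
        apply Finset.card_le_card_of_injOn (fun x => (x, x + v))
        · intro x hx
          simp only [Finset.mem_coe] at hx ⊢
          rw [hsHmem] at hx
          have hxv : x + v ∈ sH := by
            rw [hsHmem]
            refine ⟨fun h => hx.2.1 (add_eq_right.mp h), fun h => hx.1 ?_,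
              H.add_mem hx.2.2 hvH⟩
            rw [eq_neg_of_add_eq_zero_left h, hnegv]
          rw [Finset.mem_filter, Finset.mem_offDiag]
          refine ⟨⟨hsHmem x |>.mpr hx, hxv, fun h => hv0 (left_eq_add.mp h)⟩, ?_⟩
          rw [← add_assoc, VV.add_self, zero_add]
        · intro x _ y _ h
          exact congrArg Prod.fst h
      have h2 : sH.offDiag.filter (fun p => ¬ p.1 + p.2 = v) = T2 := rfl
      rw [h2, hoff] at h1
      rw [hsHcard] at hinj
      omega
    have hS2sub : ∀ W ∈ BA, S2 W ⊆ T2 := by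
      intro W hW
      rw [Finset.mem_filter] at hW
      apply Finset.filter_subset_filter
      apply Finset.offDiag_mono
      intro x hx
      rw [hS1mem] at hx
      rw [hsHmem]
      exact ⟨hx.1, hx.2.1, hW.2 hx.2.2⟩
    have hS2disj : ∀ W1 ∈ BA, ∀ W2 ∈ BA, W1 ≠ W2 → Disjoint (S2 W1) (S2 W2) := by
      intro W1 h1 W2 h2 hne
      rw [Finset.mem_filter] at h1 h2
      rw [Finset.disjoint_left]
      intro p hp1 hp2
      rw [hS2def] at hp1 hp2
      simp only [Finset.mem_filter, Finset.mem_offDiag, hS1mem] at hp1 hp2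
      exact hkey W1 (hmemCf.mp h1.1) W2 (hmemCf.mp h2.1) hne p.1 p.2
        hp1.1.1.2.2 hp2.1.1.2.2 hp1.1.2.1.2.2 hp2.1.2.1.2.2
        hp1.1.1.2.1 hp1.1.2.1.2.1 hp1.1.2.2
    have hS2cardB : ∀ W ∈ B, (S2 W).card = 42 := by
      intro W hW
      rw [Finset.mem_filter] at hW
      have hWC : W ∈ C := hmemCf.mp hW.1
      have hs : (S1 W).card = 7 := by
        have hveq : (S1 W) = (fs (W : Set V)).erase 0 := by
          apply Finset.erase_eq_of_notMem
          rw [Finset.mem_erase]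
          rintro ⟨-, hvv⟩
          exact hW.2.2 (VV.mem_fs.mp hvv)
        rw [hveq, Finset.card_erase_of_mem (VV.mem_fs.mpr W.zero_mem), hcardW W hWC]
      have hfull : (S1 W).offDiag.filter (fun p => ¬ p.1 + p.2 = v) = (S1 W).offDiag := by
        apply Finset.filter_true_of_mem
        intro p hp
        rw [Finset.mem_offDiag] at hp
        have h1 := (hS1mem W p.1).mp hp.1
        have h2 := (hS1mem W p.2).mp hp.2.1
        intro hsum
        exact hW.2.2 (hsum ▸ W.add_mem h1.2.2 h2.2.2)
      rw [hS2def]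
      simp only []
      rw [hfull, Finset.offDiag_card, hs]
    have hS2cardA1 : ∀ W ∈ A1, 24 ≤ (S2 W).card := by
      intro W hW
      rw [Finset.mem_filter] at hW
      have hWC : W ∈ C := hmemCf.mp hW.1
      have hs : (S1 W).card = 6 := hS1card W hWC hW.2.2
      have hoff : (S1 W).offDiag.card = 30 := by
        rw [Finset.offDiag_card, hs]
      have h1 := Finset.card_filter_add_card_filter_not
        (s := (S1 W).offDiag) (fun p => p.1 + p.2 = v)
      have hinj : ((S1 W).offDiag.filter (fun p => p.1 + p.2 = v)).card ≤ (S1 W).card := by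
        apply Finset.card_le_card_of_injOn (fun p => p.1)
        · intro p hp
          rw [Finset.mem_coe, Finset.mem_filter, Finset.mem_offDiag] at hp
          exact hp.1.1
        · intro p hp q hq hfst
          rw [Finset.mem_coe, Finset.mem_filter] at hp hq
          have hfst' : p.1 = q.1 := hfst
          have hsum : p.1 + p.2 = q.1 + q.2 := by rw [hp.2, hq.2]
          rw [hfst'] at hsum
          exact Prod.ext hfst' (add_left_cancel hsum)
      have h2 : ((S1 W).offDiag.filter (fun p => ¬ p.1 + p.2 = v)) = S2 W := rfl
      rw [h2, hoff] at h1
      rw [hs] at hinj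
      omega
    have hp := VV.pack2 BA S2 T2 hS2sub hS2disj
    have hsum : ∑ W ∈ BA, (S2 W).card =
        ∑ W ∈ BA.filter (fun W => v ∈ W), (S2 W).card +
        ∑ W ∈ BA.filter (fun W => ¬ v ∈ W), (S2 W).card :=
      (Finset.sum_filter_add_sum_filter_not BA (fun W => v ∈ W)
        (fun W => (S2 W).card)).symm
    have hBAf2' : BA.filter (fun W => ¬ v ∈ W) = B := hBAf2
    rw [hBAf1, hBAf2'] at hsum
    have hsumB : ∑ W ∈ B, (S2 W).card = B.card * 42 := Finset.sum_const_nat hS2cardB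
    have hsumA1 : A1.card * 24 ≤ ∑ W ∈ A1, (S2 W).card := by
      calc A1.card * 24 = A1.card • 24 := by rw [smul_eq_mul]
        _ ≤ ∑ W ∈ A1, (S2 W).card := Finset.card_nsmul_le_sum A1 _ 24 hS2cardA1
    rw [hsum, hsumB] at hp
    omega
  -- conclusion
  rw [hCcard]
  omega
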